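/- Let A be a 3×3 positive definite symmetric integer matrix with det(A) = 1. Then there exists P ∈ SL_3(ℤ) with A = Pᵀ P. -/

import Mathlib

open Matrix

section Basics
variable {n : ℕ}

def qf (A : Matrix (Fin n) (Fin n) ℤ) (x : Fin n → ℤ) : ℤ :=
  dotProduct x (A.mulVec x)

lemma qf_congr (A U : Matrix (Fin n) (Fin n) ℤ) (x : Fin n → ℤ) :
    qf (Uᵀ * A * U) x = qf A (U.mulVec x) := by
  unfold qf
  rw [← mulVec_mulVec, ← mulVec_mulVec, dotProduct_mulVec, vecMul_transpose]

def uinv (U : Matrix (Fin n) (Fin n) ℤ) : Matrix (Fin n) (Fin n) ℤ :=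
  U.det • U.adjugate

lemma uinv_mul (U : Matrix (Fin n) (Fin n) ℤ) (hU : U.det = 1 ∨ U.det = -1) :
    uinv U * U = 1 := by
  have h2 : U.det * U.det = 1 := by rcases hU with h | h <;> rw [h] <;> ring
  rw [uinv, smul_mul_assoc, adjugate_mul, smul_smul, h2, one_smul]

lemma mul_uinv (U : Matrix (Fin n) (Fin n) ℤ) (hU : U.det = 1 ∨ U.det = -1) :
    U * uinv U = 1 := by
  have h2 : U.det * U.det = 1 := by rcases hU with h | h <;> rw [h] <;> ring
  rw [uinv, mul_smul_comm, mul_adjugate, smul_smul, h2, one_smul]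

lemma uinv_det_one (U : Matrix (Fin n) (Fin n) ℤ) (hU : U.det = 1) :
    (uinv U).det = 1 := by
  have := congrArg Matrix.det (uinv_mul U (Or.inl hU))
  rw [det_mul, det_one, hU, mul_one] at this
  exact this

lemma mulVec_ne_zero (U : Matrix (Fin n) (Fin n) ℤ) (hU : U.det = 1 ∨ U.det = -1)
    (x : Fin n → ℤ) (hx : x ≠ 0) : U.mulVec x ≠ 0 := by
  intro h
  apply hx
  have : (uinv U).mulVec (U.mulVec x) = 0 := by rw [h, mulVec_zero]
  rwa [mulVec_mulVec, uinv_mul U hU, one_mulVec] at this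

def pdf (A : Matrix (Fin n) (Fin n) ℤ) : Prop :=
  ∀ x : Fin n → ℤ, x ≠ 0 → 0 < qf A x

lemma pdf_congr (A U : Matrix (Fin n) (Fin n) ℤ) (hU : U.det = 1 ∨ U.det = -1)
    (hA : pdf A) : pdf (Uᵀ * A * U) := by
  intro x hx
  rw [qf_congr]
  exact hA _ (mulVec_ne_zero U hU x hx)

lemma symm_congr (A U : Matrix (Fin n) (Fin n) ℤ) (hA : A.IsSymm) :
    (Uᵀ * A * U).IsSymm := by
  unfold Matrix.IsSymm at *
  rw [transpose_mul, transpose_mul, transpose_transpose, hA, mul_assoc]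

lemma det_congr (A U : Matrix (Fin n) (Fin n) ℤ) (hU : U.det = 1 ∨ U.det = -1) :
    (Uᵀ * A * U).det = A.det := by
  rw [det_mul, det_mul, det_transpose]
  rcases hU with h | h <;> rw [h] <;> ring

lemma unconj (A U B : Matrix (Fin n) (Fin n) ℤ) (hU : U.det = 1 ∨ U.det = -1)
    (h : Uᵀ * A * U = B) : A = (uinv U)ᵀ * B * (uinv U) := by
  rw [← h]
  have h1 : (uinv U)ᵀ * Uᵀ = 1 := by rw [← transpose_mul, mul_uinv U hU, transpose_one]
  calc A = ((uinv U)ᵀ * Uᵀ) * A * (U * uinv U) := by rw [h1, mul_uinv U hU, one_mul, mul_one]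
  _ = (uinv U)ᵀ * (Uᵀ * A * U) * (uinv U) := by noncomm_ring

lemma qf_smul (A : Matrix (Fin n) (Fin n) ℤ) (g : ℤ) (x : Fin n → ℤ) :
    qf A (g • x) = g ^ 2 * qf A x := by
  unfold qf
  rw [mulVec_smul, dotProduct_smul, smul_dotProduct]
  simp only [smul_eq_mul]
  ring

lemma exists_min [NeZero n] (A : Matrix (Fin n) (Fin n) ℤ) (hA : pdf A) :
    ∃ m : ℤ, (∃ x : Fin n → ℤ, x ≠ 0 ∧ qf A x = m) ∧ 1 ≤ m ∧
      ∀ y : Fin n → ℤ, y ≠ 0 → m ≤ qf A y := by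
  classical
  set S : Set ℕ := {k : ℕ | ∃ x : Fin n → ℤ, x ≠ 0 ∧ qf A x = k} with hS
  have hne : S.Nonempty := by
    have h0 : (Pi.single (0 : Fin n) (1:ℤ)) ≠ (0 : Fin n → ℤ) := by
      intro h
      have := congrFun h 0
      simp at this
    refine ⟨(qf A (Pi.single 0 1)).toNat, ⟨Pi.single 0 1, h0, ?_⟩⟩
    rw [Int.toNat_of_nonneg (le_of_lt (hA _ h0))]
  obtain ⟨x, hx, hqx⟩ := Nat.sInf_mem hne
  refine ⟨(sInf S : ℕ), ⟨x, hx, hqx⟩, ?_, ?_⟩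
  · have := hA x hx
    omega
  · intro y hy
    have hyS : (qf A y).toNat ∈ S :=
      ⟨y, hy, (Int.toNat_of_nonneg (le_of_lt (hA y hy))).symm⟩
    have := Nat.sInf_le hyS
    have h2 := hA y hy
    omega

end Basics

lemma exists_round (b m : ℤ) (hm : 1 ≤ m) : ∃ k : ℤ, 2 * |b - k * m| ≤ m := by
  have h1 := Int.emod_nonneg b (by omega : m ≠ 0)
  have h2 := Int.emod_lt_of_pos b (by omega : 0 < m)
  have h3 := Int.mul_ediv_add_emod b m
  by_cases h : 2 * (b % m) ≤ m
  · exact ⟨b / m, by rw [abs_of_nonneg] <;> nlinarith⟩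
  · refine ⟨b / m + 1, ?_⟩
    rw [abs_of_nonpos] <;> nlinarith

/-- a shortest vector is primitive (2D) -/
lemma min_primitive2 (A : Matrix (Fin 2) (Fin 2) ℤ) (m : ℤ) (hm1 : 1 ≤ m)
    (hmin : ∀ y : Fin 2 → ℤ, y ≠ 0 → m ≤ qf A y)
    (x : Fin 2 → ℤ) (hx : x ≠ 0) (hqx : qf A x = m) :
    Int.gcd (x 0) (x 1) = 1 := by
  set g : ℕ := Int.gcd (x 0) (x 1) with hg
  have hg0 : g ≠ 0 := by
    intro h
    rw [hg] at h
    rw [Int.gcd_eq_zero_iff] at h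
    apply hx
    funext i
    fin_cases i <;> simp [h.1, h.2]
  have hd0 : (g : ℤ) ∣ x 0 := Int.gcd_dvd_left (x 0) (x 1)
  have hd1 : (g : ℤ) ∣ x 1 := Int.gcd_dvd_right (x 0) (x 1)
  set y : Fin 2 → ℤ := fun i => x i / g with hy
  have hxy : x = (g : ℤ) • y := by
    funext i
    fin_cases i <;> simp [hy] <;>
      [rw [Int.mul_ediv_cancel' hd0]; rw [Int.mul_ediv_cancel' hd1]]
  have hyne : y ≠ 0 := by
    intro h
    apply hx
    rw [hxy, h, smul_zero]
  have h1 : m = (g : ℤ) ^ 2 * qf A y := by rw [← hqx, hxy, qf_smul]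
  have h2 : m ≤ qf A y := hmin y hyne
  have hgz : 1 ≤ (g : ℤ) := by exact_mod_cast Nat.one_le_iff_ne_zero.mpr hg0
  have h3 : (g:ℤ)^2 * m ≤ (g:ℤ)^2 * qf A y := by nlinarith [sq_nonneg (g:ℤ)]
  have h4 : (g:ℤ)^2 ≤ 1 := by nlinarith
  have : (g : ℤ) = 1 := by nlinarith
  exact_mod_cast this

lemma qf_single {n : ℕ} (B : Matrix (Fin n) (Fin n) ℤ) (i : Fin n) :
    qf B (Pi.single i 1) = B i i := by
  simp [qf, dotProduct, mulVec, Pi.single_apply]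

lemma mulVec_single' {n : ℕ} (U : Matrix (Fin n) (Fin n) ℤ) (i : Fin n) :
    U.mulVec (Pi.single i 1) = fun j => U j i := by
  funext j
  simp [mulVec, dotProduct, Pi.single_apply]

lemma single_ne_zero' {n : ℕ} (i : Fin n) : (Pi.single i (1:ℤ)) ≠ (0 : Fin n → ℤ) := by
  intro h
  have := congrFun h i
  simp at this


lemma two_reduce (C : Matrix (Fin 2) (Fin 2) ℤ) (hs : C.IsSymm) (hp : pdf C) :
    ∃ (W : Matrix (Fin 2) (Fin 2) ℤ) (m b c : ℤ), W.det = 1 ∧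
      Wᵀ * C * W = !![m, b; b, c] ∧ 1 ≤ m ∧ m ≤ c ∧ 2 * |b| ≤ m ∧
      (∀ y : Fin 2 → ℤ, y ≠ 0 → m ≤ qf C y) := by
  obtain ⟨m, ⟨x, hx, hqx⟩, hm1, hmin⟩ := exists_min C hp
  have hprim := min_primitive2 C m hm1 hmin x hx hqx
  obtain ⟨p, q, hpq⟩ := Int.isCoprime_iff_gcd_eq_one.mpr hprim
  set U : Matrix (Fin 2) (Fin 2) ℤ := !![x 0, -q; x 1, p] with hU
  have hUdet : U.det = 1 := by
    rw [hU, det_fin_two_of]; linarith [hpq]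
  obtain ⟨B, hBdef⟩ : ∃ B, B = Uᵀ * C * U := ⟨_, rfl⟩
  have hB00 : B 0 0 = m := by
    have h1 : U.mulVec (Pi.single 0 1) = x := by
      rw [mulVec_single']
      funext j
      fin_cases j <;> simp [hU]
    have h2 := qf_congr C U (Pi.single 0 1)
    rw [h1, hqx] at h2
    rw [hBdef, ← qf_single (Uᵀ * C * U) 0, h2]
  have hBs : B.IsSymm := hBdef ▸ symm_congr C U hs
  obtain ⟨k, hk⟩ := exists_round (B 0 1) m hm1
  set V : Matrix (Fin 2) (Fin 2) ℤ := !![(1:ℤ), -k; 0, 1] with hV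
  have hVdet : V.det = 1 := by rw [hV, det_fin_two_of]; ring
  set W := U * V with hW
  have hWdet : W.det = 1 := by rw [hW, det_mul, hUdet, hVdet]; ring
  have hWC : Wᵀ * C * W = Vᵀ * B * V := by
    rw [hW, transpose_mul, hBdef]
    noncomm_ring
  set b' : ℤ := B 0 1 - k * m with hb'
  set c' : ℤ := m * k^2 - 2 * k * B 0 1 + B 1 1 with hc'
  have hVT : Vᵀ = !![(1:ℤ), 0; -k, 1] := by
    rw [hV]; ext i j; fin_cases i <;> fin_cases j <;> rfl
  have h10 : B 1 0 = B 0 1 := hBs.apply 0 1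
  have hform : Vᵀ * B * V = !![m, b'; b', c'] := by
    rw [hVT, hV]
    ext i j
    fin_cases i <;> fin_cases j <;>
      simp [mul_apply, vecMul, dotProduct, Fin.sum_univ_two, hB00, h10, hb', hc'] <;> ring
  have hcm : m ≤ c' := by
    have h1 : W.mulVec (Pi.single 1 1) ≠ 0 :=
      mulVec_ne_zero W (Or.inl hWdet) _ (single_ne_zero' 1)
    have h2 := qf_congr C W (Pi.single 1 1)
    rw [qf_single] at h2
    have h3 := hmin _ h1
    rw [← h2] at h3
    rw [hWC, hform] at h3
    simpa using h3
  exact ⟨W, m, b', c', hWdet, by rw [hWC, hform], hm1, hcm, hk, hmin⟩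


/-- the complement form -/
def comp3 (B : Matrix (Fin 3) (Fin 3) ℤ) : Matrix (Fin 2) (Fin 2) ℤ :=
  !![B 0 0 * B 1 1 - B 0 1 ^ 2, B 0 0 * B 1 2 - B 0 1 * B 0 2;
     B 0 0 * B 1 2 - B 0 1 * B 0 2, B 0 0 * B 2 2 - B 0 2 ^ 2]

lemma key_identity (B : Matrix (Fin 3) (Fin 3) ℤ) (hs : B.IsSymm)
    (x0 y1 y2 : ℤ) :
    B 0 0 * qf B ![x0, y1, y2] =
      (B 0 0 * x0 + B 0 1 * y1 + B 0 2 * y2) ^ 2 + qf (comp3 B) ![y1, y2] := by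
  have h10 : B 1 0 = B 0 1 := hs.apply 0 1
  have h20 : B 2 0 = B 0 2 := hs.apply 0 2
  have h21 : B 2 1 = B 1 2 := hs.apply 1 2
  simp [qf, comp3, dotProduct, mulVec, Fin.sum_univ_three, Fin.sum_univ_two,
    h10, h20, h21]
  ring

lemma comp3_symm (B : Matrix (Fin 3) (Fin 3) ℤ) : (comp3 B).IsSymm := by
  unfold Matrix.IsSymm comp3
  ext i j
  fin_cases i <;> fin_cases j <;> rfl

lemma comp3_det (B : Matrix (Fin 3) (Fin 3) ℤ) (hs : B.IsSymm) :
    (comp3 B).det = B 0 0 * B.det := by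
  have h10 : B 1 0 = B 0 1 := hs.apply 0 1
  have h20 : B 2 0 = B 0 2 := hs.apply 0 2
  have h21 : B 2 1 = B 1 2 := hs.apply 1 2
  rw [det_fin_three, comp3, det_fin_two_of, h10, h20, h21]
  ring

lemma comp3_pdf (B : Matrix (Fin 3) (Fin 3) ℤ) (hs : B.IsSymm) (hp : pdf B)
    (hm : 1 ≤ B 0 0) : pdf (comp3 B) := by
  intro y hy
  set m := B 0 0 with hmm
  set z : Fin 3 → ℤ := ![-(B 0 1 * y 0 + B 0 2 * y 1), m * y 0, m * y 1] with hz
  have hzy : z ≠ 0 := by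
    intro h
    apply hy
    have h1 := congrFun h 1
    have h2 := congrFun h 2
    have hm0 : m ≠ 0 := by omega
    simp [hz, hm0] at h1 h2
    funext i
    fin_cases i <;> simp [h1, h2]
  have hpos := hp z hzy
  have hkey := key_identity B hs (-(B 0 1 * y 0 + B 0 2 * y 1)) (m * y 0) (m * y 1)
  have hz' : ![-(B 0 1 * y 0 + B 0 2 * y 1), m * y 0, m * y 1] = z := rfl
  rw [hz'] at hkey
  have hql : qf (comp3 B) ![m * y 0, m * y 1] = m ^ 2 * qf (comp3 B) ![y 0, y 1] := by
    simp [qf, dotProduct, mulVec, Fin.sum_univ_two]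
    ring
  have hsq : (m * -(B 0 1 * y 0 + B 0 2 * y 1) + B 0 1 * (m * y 0) + B 0 2 * (m * y 1)) = 0 := by
    ring
  rw [hql, hsq] at hkey
  have hyeta : ![y 0, y 1] = y := by
    funext i; fin_cases i <;> rfl
  rw [hyeta] at hkey
  nlinarith

/-- Hermite bound in dimension 2 -/
lemma two_bound (C : Matrix (Fin 2) (Fin 2) ℤ) (hs : C.IsSymm) (hp : pdf C) :
    ∃ m : ℤ, 1 ≤ m ∧ (∃ x : Fin 2 → ℤ, x ≠ 0 ∧ qf C x = m) ∧
      (∀ y : Fin 2 → ℤ, y ≠ 0 → m ≤ qf C y) ∧ 3 * m ^ 2 ≤ 4 * C.det := by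
  obtain ⟨W, m, b, c, hWdet, hform, hm1, hmc, hb, hmin⟩ := two_reduce C hs hp
  have hdet : m * c - b ^ 2 = C.det := by
    have := det_congr C W (Or.inl hWdet)
    rw [hform, det_fin_two_of] at this
    linarith [this]
  have hminval : ∃ x : Fin 2 → ℤ, x ≠ 0 ∧ qf C x = m := by
    refine ⟨W.mulVec (Pi.single 0 1), mulVec_ne_zero W (Or.inl hWdet) _ (single_ne_zero' 0), ?_⟩
    have h2 := qf_congr C W (Pi.single 0 1)
    rw [qf_single, hform] at h2
    rw [← h2]
    simp
  refine ⟨m, hm1, hminval, hmin, ?_⟩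
  have habs := sq_abs b
  nlinarith [sq_nonneg b, abs_nonneg b]

/-- determinant 1 case in dimension 2 -/
lemma two_unit (C : Matrix (Fin 2) (Fin 2) ℤ) (hs : C.IsSymm) (hp : pdf C)
    (hd : C.det = 1) : ∃ R : Matrix (Fin 2) (Fin 2) ℤ, R.det = 1 ∧ C = Rᵀ * R := by
  obtain ⟨W, m, b, c, hWdet, hform, hm1, hmc, hb, hmin⟩ := two_reduce C hs hp
  have hdet : m * c - b ^ 2 = 1 := by
    have := det_congr C W (Or.inl hWdet)
    rw [hform, det_fin_two_of, hd] at this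
    linarith [this]
  have habs := sq_abs b
  have hm : m = 1 := by nlinarith [abs_nonneg b]
  have hb0 : b = 0 := by
    rw [hm] at hb
    have := abs_nonneg b
    have : |b| = 0 := by omega
    exact abs_eq_zero.mp this
  have hc1 : c = 1 := by rw [hm, hb0] at hdet; linarith
  have hone : Wᵀ * C * W = 1 := by
    rw [hform, hm, hb0, hc1]
    ext i j
    fin_cases i <;> fin_cases j <;> simp [Matrix.one_apply]
  have := unconj C W 1 (Or.inl hWdet) hone
  rw [mul_one] at this
  exact ⟨uinv W, uinv_det_one W hWdet, this⟩


lemma min_primitive3 (A : Matrix (Fin 3) (Fin 3) ℤ) (m : ℤ) (hm1 : 1 ≤ m)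
    (hmin : ∀ y : Fin 3 → ℤ, y ≠ 0 → m ≤ qf A y)
    (x : Fin 3 → ℤ) (hx : x ≠ 0) (hqx : qf A x = m) :
    Int.gcd (Int.gcd (x 0) (x 1) : ℤ) (x 2) = 1 := by
  set g : ℕ := Int.gcd (Int.gcd (x 0) (x 1) : ℤ) (x 2) with hg
  have hd01 : (g : ℤ) ∣ (Int.gcd (x 0) (x 1) : ℤ) := Int.gcd_dvd_left _ (x 2)
  have hd0 : (g : ℤ) ∣ x 0 := hd01.trans (Int.gcd_dvd_left (x 0) (x 1))
  have hd1 : (g : ℤ) ∣ x 1 := hd01.trans (Int.gcd_dvd_right (x 0) (x 1))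
  have hd2 : (g : ℤ) ∣ x 2 := Int.gcd_dvd_right _ (x 2)
  have hg0 : g ≠ 0 := by
    intro h
    rw [hg, Int.gcd_eq_zero_iff] at h
    obtain ⟨h01, h2⟩ := h
    rw [Nat.cast_eq_zero, Int.gcd_eq_zero_iff] at h01
    apply hx
    funext i
    fin_cases i <;> simp [h01.1, h01.2, h2]
  set y : Fin 3 → ℤ := fun i => x i / g with hy
  have hxy : x = (g : ℤ) • y := by
    funext i
    fin_cases i <;> simp [hy] <;>
      [rw [Int.mul_ediv_cancel' hd0]; rw [Int.mul_ediv_cancel' hd1];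
       rw [Int.mul_ediv_cancel' hd2]]
  have hyne : y ≠ 0 := by
    intro h
    apply hx
    rw [hxy, h, smul_zero]
  have h1 : m = (g : ℤ) ^ 2 * qf A y := by rw [← hqx, hxy, qf_smul]
  have h2 : m ≤ qf A y := hmin y hyne
  have hgz : 1 ≤ (g : ℤ) := by exact_mod_cast Nat.one_le_iff_ne_zero.mpr hg0
  have h3 : (g:ℤ)^2 * m ≤ (g:ℤ)^2 * qf A y := by nlinarith [sq_nonneg (g:ℤ)]
  have h4 : (g:ℤ)^2 ≤ 1 := by nlinarith
  have : (g : ℤ) = 1 := by nlinarith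
  exact_mod_cast this



lemma complete3 (x : Fin 3 → ℤ) (h : Int.gcd (Int.gcd (x 0) (x 1) : ℤ) (x 2) = 1) :
    ∃ U : Matrix (Fin 3) (Fin 3) ℤ, U.det = 1 ∧ ∀ i, U i 0 = x i := by
  by_cases hg : Int.gcd (x 0) (x 1) = 0
  · -- x 0 = x 1 = 0, so x 2 = ±1
    have h01 := Int.gcd_eq_zero_iff.mp hg
    have hc : x 2 = 1 ∨ x 2 = -1 := by
      rw [hg] at h
      simp [Int.gcd] at h
      omega
    rcases hc with hc | hc
    · refine ⟨!![x 0, 1, 0; x 1, 0, 1; x 2, 0, 0], ?_, ?_⟩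
      · rw [det_fin_three]
        simp [vecHead, vecTail]
        omega
      · intro i; fin_cases i <;> rfl
    · refine ⟨!![x 0, -1, 0; x 1, 0, 1; x 2, 0, 0], ?_, ?_⟩
      · rw [det_fin_three]
        simp [vecHead, vecTail]
        omega
      · intro i; fin_cases i <;> rfl
  · set g : ℤ := (Int.gcd (x 0) (x 1) : ℤ) with hgdef
    have hgne : g ≠ 0 := by
      simp only [hgdef, ne_eq, Nat.cast_eq_zero]
      exact hg
    have hda : g ∣ x 0 := Int.gcd_dvd_left (x 0) (x 1)
    have hdb : g ∣ x 1 := Int.gcd_dvd_right (x 0) (x 1)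
    obtain ⟨a', ha'⟩ := hda
    obtain ⟨b', hb'⟩ := hdb
    have hbez : x 0 * Int.gcdA (x 0) (x 1) + x 1 * Int.gcdB (x 0) (x 1) = g :=
      (Int.gcd_eq_gcd_ab (x 0) (x 1)).symm
    set u := Int.gcdA (x 0) (x 1) with hu
    set v := Int.gcdB (x 0) (x 1) with hv
    have hab1 : u * a' + v * b' = 1 := by
      have h2 : g * (u * a' + v * b') = g * 1 := by
        linear_combination hbez - u * ha' - v * hb'
      exact mul_left_cancel₀ hgne h2
    obtain ⟨s, t, hst⟩ := Int.isCoprime_iff_gcd_eq_one.mpr h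
    refine ⟨!![x 0, -v, -(t * a'); x 1, u, -(t * b'); x 2, 0, s], ?_, ?_⟩
    · rw [det_fin_three]
      simp [vecHead, vecTail]
      linear_combination s * hbez + t * (x 2) * hab1 + hst
    · intro i; fin_cases i <;> rfl



set_option maxHeartbeats 1000000

/-- the minimum of a unimodular positive definite ternary form is 1 -/
lemma three_min_one (B : Matrix (Fin 3) (Fin 3) ℤ) (hBsymm : B.IsSymm) (hBpd : pdf B)
    (hBdet : B.det = 1) (m : ℤ) (hB00 : B 0 0 = m) (hm1 : 1 ≤ m)
    (hBmin : ∀ z : Fin 3 → ℤ, z ≠ 0 → m ≤ qf B z) : m = 1 := by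
  have hm1' : 1 ≤ B 0 0 := by rw [hB00]; exact hm1
  have hCdet : (comp3 B).det = m := by
    rw [comp3_det B hBsymm, hB00, hBdet, mul_one]
  obtain ⟨m', hm'1, ⟨y, hy, hqy⟩, hmin', hbnd⟩ :=
    two_bound (comp3 B) (comp3_symm B) (comp3_pdf B hBsymm hBpd hm1')
  rw [hCdet] at hbnd
  obtain ⟨k, hk⟩ := exists_round (B 0 1 * y 0 + B 0 2 * y 1) m hm1
  have hkey := key_identity B hBsymm (-k) (y 0) (y 1)
  have hyeta : ![y 0, y 1] = y := by funext i; fin_cases i <;> rfl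
  rw [hyeta, hqy, hB00] at hkey
  have hsqeq : (m * -k + B 0 1 * y 0 + B 0 2 * y 1) =
      (B 0 1 * y 0 + B 0 2 * y 1 - k * m) := by ring
  rw [hsqeq] at hkey
  have hvne : (Matrix.vecCons (-k) y) ≠ 0 := by
    intro hcontra
    apply hy
    have h1 := congrFun hcontra 1
    have h2 := congrFun hcontra 2
    simp at h1 h2
    funext i
    fin_cases i
    · exact h1
    · exact h2
  have hq := hBmin _ hvne
  have h4 : 4 * (B 0 1 * y 0 + B 0 2 * y 1 - k * m) ^ 2 ≤ m ^ 2 := by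
    nlinarith [sq_abs (B 0 1 * y 0 + B 0 2 * y 1 - k * m),
      abs_nonneg (B 0 1 * y 0 + B 0 2 * y 1 - k * m)]
  have hqm : m * m ≤ m * qf B (Matrix.vecCons (-k) y) := by nlinarith [hq, hm1]
  have h5 : 3 * m ^ 2 ≤ 4 * m' := by nlinarith [hkey, hqm, h4]
  have h9 : 9 * m ^ 4 ≤ 16 * m' ^ 2 := by nlinarith [h5, sq_nonneg m, hm'1, hm1]
  have h27 : 27 * m ^ 4 ≤ 64 * m := by nlinarith [h9, hbnd]
  by_contra hcon
  have h2 : 2 ≤ m := by omega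
  have a1 : 2 * m ≤ m * m := by nlinarith
  have a2 : 2 * (m * m) ≤ m * (m * m) := by nlinarith
  have a3 : 2 * (m * (m * m)) ≤ m * (m * (m * m)) := by nlinarith
  nlinarith [h27, a1, a2, a3, hm1]

/-- splitting off a unit corner -/
lemma block_step (B : Matrix (Fin 3) (Fin 3) ℤ) (hBsymm : B.IsSymm) (hBpd : pdf B)
    (hBdet : B.det = 1) (hB00 : B 0 0 = 1) :
    ∃ V S : Matrix (Fin 3) (Fin 3) ℤ, V.det = 1 ∧ S.det = 1 ∧ Vᵀ * B * V = Sᵀ * S := by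
  set V : Matrix (Fin 3) (Fin 3) ℤ :=
    !![1, -B 0 1, -B 0 2; 0, 1, 0; 0, 0, 1] with hV
  have hVdet : V.det = 1 := by
    rw [hV, det_fin_three]
    simp [vecHead, vecTail]
  obtain ⟨B', hB'def⟩ : ∃ B', B' = Vᵀ * B * V := ⟨_, rfl⟩
  have hB'symm : B'.IsSymm := hB'def ▸ symm_congr B V hBsymm
  have hB'pd : pdf B' := hB'def ▸ pdf_congr B V (Or.inl hVdet) hBpd
  have hB'det : B'.det = 1 := by rw [hB'def, det_congr B V (Or.inl hVdet), hBdet]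
  have hB10 : B 1 0 = B 0 1 := hBsymm.apply 0 1
  have hB20 : B 2 0 = B 0 2 := hBsymm.apply 0 2
  have hB'00 : B' 0 0 = 1 := by
    rw [hB'def]
    simp [hV, mul_apply, Fin.sum_univ_three, vecHead, vecTail, hB00, hB10, hB20]
  have hB'01 : B' 0 1 = 0 := by
    rw [hB'def]
    simp [hV, mul_apply, Fin.sum_univ_three, vecHead, vecTail, hB00, hB10, hB20]
    try ring
  have hB'02 : B' 0 2 = 0 := by
    rw [hB'def]
    simp [hV, mul_apply, Fin.sum_univ_three, vecHead, vecTail, hB00, hB10, hB20]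
    try ring
  have hB'10 : B' 1 0 = 0 := by rw [hB'symm.apply 0 1, hB'01]
  have hB'20 : B' 2 0 = 0 := by rw [hB'symm.apply 0 2, hB'02]
  have hB'21 : B' 2 1 = B' 1 2 := hB'symm.apply 1 2
  set C2 : Matrix (Fin 2) (Fin 2) ℤ :=
    !![B' 1 1, B' 1 2; B' 1 2, B' 2 2] with hC2
  have hC2symm : C2.IsSymm := by
    unfold Matrix.IsSymm
    ext i j
    fin_cases i <;> fin_cases j <;> rfl
  have hC2pd : pdf C2 := by
    intro z hz
    have hzv : (![(0 : ℤ), z 0, z 1]) ≠ 0 := by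
      intro hcontra
      apply hz
      have h1 := congrFun hcontra 1
      have h2 := congrFun hcontra 2
      simp at h1 h2
      funext i
      fin_cases i
      · exact h1
      · exact h2
    have := hB'pd _ hzv
    have hqe : qf B' ![0, z 0, z 1] = qf C2 z := by
      simp [qf, hC2, dotProduct, mulVec, Fin.sum_univ_three, Fin.sum_univ_two,
        vecHead, vecTail, hB'21]
      try ring
    rwa [hqe] at this
  have hC2det : C2.det = 1 := by
    have hd3 := det_fin_three B'
    rw [hB'00, hB'01, hB'02, hB'10, hB'20, hB'det] at hd3
    rw [hB'21] at hd3
    rw [hC2, det_fin_two_of]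
    linarith [hd3]
  obtain ⟨R, hRdet, hRC⟩ := two_unit C2 hC2symm hC2pd hC2det
  set S : Matrix (Fin 3) (Fin 3) ℤ :=
    !![1, 0, 0; 0, R 0 0, R 0 1; 0, R 1 0, R 1 1] with hS
  have hSdet : S.det = 1 := by
    rw [hS, det_fin_three]
    simp [vecHead, vecTail]
    have := det_fin_two R
    rw [this] at hRdet
    linarith [hRdet]
  have e11 : B' 1 1 = R 0 0 * R 0 0 + R 1 0 * R 1 0 := by
    have := congrFun (congrFun hRC 0) 0
    simp [hC2, mul_apply, Fin.sum_univ_two] at this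
    linarith [this]
  have e12 : B' 1 2 = R 0 0 * R 0 1 + R 1 0 * R 1 1 := by
    have := congrFun (congrFun hRC 0) 1
    simp [hC2, mul_apply, Fin.sum_univ_two] at this
    linarith [this]
  have e22 : B' 2 2 = R 0 1 * R 0 1 + R 1 1 * R 1 1 := by
    have := congrFun (congrFun hRC 1) 1
    simp [hC2, mul_apply, Fin.sum_univ_two] at this
    linarith [this]
  have hSS : Sᵀ * S = B' := by
    ext i j
    fin_cases i <;> fin_cases j <;>
      simp [hS, mul_apply, Fin.sum_univ_three, vecHead, vecTail,
        hB'00, hB'01, hB'02, hB'10, hB'20, hB'21, e11, e12, e22] <;> ring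
  exact ⟨V, S, hVdet, hSdet, by rw [hB'def] at hSS; rw [hSS]⟩

/-- A positive definite symmetric integral 3×3 matrix of determinant 1 is of the
form `Pᵀ * P` with `P ∈ SL₃(ℤ)`. -/
theorem stmt_3 (A : Matrix (Fin 3) (Fin 3) ℤ)
    (hsymm : A.IsSymm)
    (hpos : ∀ x : Fin 3 → ℤ, x ≠ 0 → 0 < dotProduct x (A.mulVec x))
    (hdet : A.det = 1) :
    ∃ P : Matrix (Fin 3) (Fin 3) ℤ, P.det = 1 ∧ A = P.transpose * P := by
  have hpd : pdf A := hpos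
  obtain ⟨m, ⟨x, hx, hqx⟩, hm1, hmin⟩ := exists_min A hpd
  have hprim := min_primitive3 A m hm1 hmin x hx hqx
  obtain ⟨U, hUdet, hUcol⟩ := complete3 x hprim
  obtain ⟨B, hBdef⟩ : ∃ B, B = Uᵀ * A * U := ⟨_, rfl⟩
  have hBsymm : B.IsSymm := hBdef ▸ symm_congr A U hsymm
  have hBpd : pdf B := hBdef ▸ pdf_congr A U (Or.inl hUdet) hpd
  have hBdet : B.det = 1 := by rw [hBdef, det_congr A U (Or.inl hUdet), hdet]
  have hUx : U.mulVec (Pi.single 0 1) = x := by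
    rw [mulVec_single']
    funext j
    exact hUcol j
  have hB00 : B 0 0 = m := by
    have h2 := qf_congr A U (Pi.single 0 1)
    rw [hUx, hqx] at h2
    rw [hBdef, ← qf_single (Uᵀ * A * U) 0, h2]
  have hBmin : ∀ z : Fin 3 → ℤ, z ≠ 0 → m ≤ qf B z := by
    intro z hz
    rw [hBdef, qf_congr]
    exact hmin _ (mulVec_ne_zero U (Or.inl hUdet) z hz)
  have hmm : m = 1 := three_min_one B hBsymm hBpd hBdet m hB00 hm1 hBmin
  rw [hmm] at hB00
  obtain ⟨V, S, hVdet, hSdet, hVS⟩ := block_step B hBsymm hBpd hBdet hB00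
  set W := U * V with hW
  have hWdet : W.det = 1 := by rw [hW, det_mul, hUdet, hVdet]; ring
  have hWB' : Wᵀ * A * W = Sᵀ * S := by
    rw [← hVS, hW, transpose_mul, hBdef]
    noncomm_ring
  have hA := unconj A W (Sᵀ * S) (Or.inl hWdet) hWB'
  refine ⟨S * uinv W, ?_, ?_⟩
  · rw [det_mul, hSdet, uinv_det_one W hWdet]; ring
  · rw [transpose_mul, hA]
    noncomm_ring
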